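/- Let G be a unicyclic graph whose unique cycle C has length k ≥ 5 and exactly one vertex of degree at least 3 on C, and let l be the number of leaves of G. Then MEG(G) = l + 2. -/

import Mathlib

open SimpleGraph

/-- Two vertices `x` and `y` monitor an edge `e` in `G`: there is a shortest path between
them, and `e` lies on every shortest path between `x` and `y`. -/
def Monitors {V : Type*} (G : SimpleGraph V) (x y : V) (e : Sym2 V) : Prop :=
  (∃ p : G.Walk x y, p.IsPath ∧ p.length = G.dist x y) ∧
    ∀ p : G.Walk x y, p.IsPath → p.length = G.dist x y → e ∈ p.edges

/-- `S` is a monitoring edge-geodetic set of `G`. -/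
def IsMEGSet {V : Type*} (G : SimpleGraph V) (S : Set V) : Prop :=
  ∀ e ∈ G.edgeSet, ∃ x ∈ S, ∃ y ∈ S, Monitors G x y e

/-- The minimum size of a monitoring edge-geodetic set of `G`. -/
noncomputable def megNum {V : Type*} (G : SimpleGraph V) : ℕ :=
  sInf {n | ∃ S : Set V, IsMEGSet G S ∧ S.ncard = n}

/-- The set of leaves (degree-1 vertices) of `G`. -/
def leaves {V : Type*} (G : SimpleGraph V) : Set V :=
  {v | (G.neighborSet v).ncard = 1}


set_option linter.unusedSectionVars false
section MEGAux
namespace MEGProof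

open SimpleGraph Walk

variable {V : Type*} [Fintype V] [DecidableEq V]

def CE {n : ℕ} (vs : ZMod n → V) : Set (Sym2 V) := {e | ∃ i : ZMod n, e = s(vs i, vs (i + 1))}

structure Setup (G : SimpleGraph V) (n : ℕ) (vs : ZMod n → V) : Prop where
  hconn : G.Connected
  hn : 5 ≤ n
  hinj : Function.Injective vs
  hadj : ∀ i : ZMod n, G.Adj (vs i) (vs (i + 1))
  hdeg : ∀ i : ZMod n, i ≠ 0 → G.neighborSet (vs i) = {vs (i - 1), vs (i + 1)}
  hb3 : 3 ≤ (G.neighborSet (vs 0)).ncard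
  hacyc : (G.deleteEdges (CE vs)).IsAcyclic

namespace Setup

variable {G : SimpleGraph V} {n : ℕ} {vs : ZMod n → V}

lemma nz (h : Setup G n vs) : NeZero n := ⟨by have := h.hn; omega⟩

lemma natcast_eq_zero (h : Setup G n vs) {m : ℕ} (hm : m < n) (h0 : (m : ZMod n) = 0) : m = 0 := by
  haveI := h.nz
  rw [ZMod.natCast_eq_zero_iff] at h0
  rcases Nat.eq_zero_or_pos m with h | h
  · exact h
  · exact absurd (Nat.le_of_dvd h h0) (by omega)

lemma cast_val (h : Setup G n vs) (i : ZMod n) : ((i.val : ℕ) : ZMod n) = i := by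
  haveI := h.nz; exact ZMod.natCast_rightInverse i

lemma val_lt (h : Setup G n vs) (i : ZMod n) : i.val < n := by
  haveI := h.nz; exact ZMod.val_lt i

lemma val_cast_lt (h : Setup G n vs) {m : ℕ} (hm : m < n) : ((m : ZMod n)).val = m := by
  haveI := h.nz; exact ZMod.val_cast_of_lt hm

lemma two_ne_zero' (h : Setup G n vs) : (2 : ZMod n) ≠ 0 := by
  intro h0
  have := h.natcast_eq_zero (m := 2) (by have := h.hn; omega) (by exact_mod_cast h0)
  omega

lemma one_ne_zero' (h : Setup G n vs) : (1 : ZMod n) ≠ 0 := by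
  intro h0
  have := h.natcast_eq_zero (m := 1) (by have := h.hn; omega) (by exact_mod_cast h0)
  omega

lemma val_neg' (h : Setup G n vs) {i : ZMod n} (hi : i ≠ 0) : (-i).val = n - i.val := by
  haveI := h.nz
  have h1 : i.val ≠ 0 := fun h0 => hi (by rwa [ZMod.val_eq_zero] at h0)
  have h2 : n - i.val < n := by have := h.val_lt i; omega
  have : (-i) = ((n - i.val : ℕ) : ZMod n) := by
    have : ((n : ℕ) : ZMod n) = 0 := ZMod.natCast_self n
    push_cast [Nat.cast_sub (le_of_lt (h.val_lt i))]
    rw [this, h.cast_val i]; ring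
  rw [this, h.val_cast_lt h2]

/-- CE edges are distinct for distinct indices. -/
lemma CE_inj (h : Setup G n vs) {i j : ZMod n}
    (he : s(vs i, vs (i + 1)) = s(vs j, vs (j + 1))) : i = j := by
  rw [Sym2.eq_iff] at he
  rcases he with ⟨h1, _⟩ | ⟨h1, h2⟩
  · exact h.hinj h1
  · have e1 : i = j + 1 := h.hinj h1
    have e2 : i + 1 = j := h.hinj h2
    exfalso; apply h.two_ne_zero'
    have : i + 1 + 1 = i := by rw [e2, ← e1]
    have : (2 : ZMod n) + i = i := by ring_nf; linear_combination this
    linear_combination this - i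

lemma b_mem_C (h : Setup G n vs) : vs 0 ∈ Set.range vs := ⟨0, rfl⟩

/-- Any neighbour of a non-branch cycle vertex is the previous or next cycle vertex. -/
lemma adj_cycle_vertex (h : Setup G n vs) {i : ZMod n} (hi : i ≠ 0) {w : V}
    (hadj : G.Adj (vs i) w) : w = vs (i - 1) ∨ w = vs (i + 1) := by
  have : w ∈ G.neighborSet (vs i) := hadj
  rw [h.hdeg i hi] at this
  simpa using this

/-- Any cycle vertex adjacent to the branch vertex is `vs 1` or `vs (-1)`. -/
lemma adj_b (h : Setup G n vs) {j : ZMod n} (hadj : G.Adj (vs 0) (vs j)) :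
    j = 1 ∨ j = -1 := by
  have hj : j ≠ 0 := by rintro rfl; exact G.irrefl hadj
  rcases h.adj_cycle_vertex hj hadj.symm with h1 | h1
  · left; have := h.hinj h1; linear_combination -this
  · right; have := h.hinj h1; linear_combination -this

/-- An edge from outside the cycle into the cycle enters at the branch vertex. -/
lemma entry_at_b (h : Setup G n vs) {u w : V} (hu : u ∉ Set.range vs)
    (hadj : G.Adj u w) (hw : w ∈ Set.range vs) : w = vs 0 := by
  obtain ⟨i, rfl⟩ := hw
  by_contra hne
  have hi : i ≠ 0 := fun h0 => hne (by rw [h0])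
  rcases h.adj_cycle_vertex hi hadj.symm with h1 | h1 <;>
    exact hu ⟨_, h1.symm⟩

/-- Every edge between two cycle vertices is a cycle edge. -/
lemma edge_of_C (h : Setup G n vs) {i j : ZMod n} (hadj : G.Adj (vs i) (vs j)) :
    s(vs i, vs j) ∈ CE vs := by
  by_cases hi : i = 0
  · subst hi
    rcases h.adj_b hadj with rfl | rfl
    · exact ⟨0, by rw [zero_add]⟩
    · exact ⟨-1, by rw [Sym2.eq_swap]; congr 1; ring_nf⟩
  · rcases h.adj_cycle_vertex hi hadj with h1 | h1
    · have : j = i - 1 := h.hinj h1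
      subst this
      exact ⟨i - 1, by rw [Sym2.eq_swap]; congr 1; ring_nf⟩
    · have : j = i + 1 := h.hinj h1
      subst this
      exact ⟨i, rfl⟩

/-- Each CE edge, viewed from a non-branch endpoint. -/
lemma CE_endpoints (h : Setup G n vs) {e : Sym2 V} (he : e ∈ CE vs) :
    ∃ i : ZMod n, i ≠ 0 ∧ vs i ∈ e := by
  obtain ⟨i, rfl⟩ := he
  by_cases hi : i = 0
  · exact ⟨i + 1, by simp [hi, h.one_ne_zero'], by simp⟩
  · exact ⟨i, hi, by simp⟩


/-! ### potential function and circular distance -/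

open Classical in
/-- Index of a vertex on the cycle (0 for vertices off the cycle). -/
noncomputable def phi (vs : ZMod n → V) : V → ZMod n := fun u =>
  if h : ∃ i, vs i = u then h.choose else 0

lemma phi_vs (h : Setup G n vs) (i : ZMod n) : phi vs (vs i) = i := by
  classical
  have hex : ∃ j, vs j = vs i := ⟨i, rfl⟩
  rw [phi, dif_pos hex]
  exact h.hinj hex.choose_spec

lemma phi_nmem (h : Setup G n vs) {u : V} (hu : u ∉ Set.range vs) : phi vs u = 0 := by
  classical
  rw [phi, dif_neg]
  rintro ⟨i, hi⟩; exact hu ⟨i, hi⟩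

/-- Circular distance of an index difference. -/
def cd (n : ℕ) (δ : ZMod n) : ℕ := min δ.val (n - δ.val)

lemma cd_zero (h : Setup G n vs) : cd n (0 : ZMod n) = 0 := by
  haveI := h.nz; simp [cd]

lemma cd_triangle (h : Setup G n vs) (a b : ZMod n) : cd n (a + b) ≤ cd n a + cd n b := by
  haveI := h.nz
  have hva := h.val_lt a
  have hvb := h.val_lt b
  have hadd : (a + b).val = (a.val + b.val) % n := ZMod.val_add a b
  rcases lt_or_ge (a.val + b.val) n with hlt | hge
  · rw [Nat.mod_eq_of_lt hlt] at hadd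
    simp only [cd, hadd]; omega
  · have : (a.val + b.val) % n = a.val + b.val - n := by
      rw [Nat.mod_eq_sub_mod hge, Nat.mod_eq_of_lt (by omega)]
    rw [this] at hadd
    simp only [cd, hadd]; omega

lemma cd_one (h : Setup G n vs) : cd n (1 : ZMod n) = 1 := by
  have hv : (1 : ZMod n).val = 1 := by
    have := h.val_cast_lt (m := 1) (by have := h.hn; omega)
    simpa using this
  simp only [cd, hv]; have := h.hn; omega

lemma cd_neg_one (h : Setup G n vs) : cd n (-1 : ZMod n) = 1 := by
  have hv : (-1 : ZMod n).val = n - 1 := by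
    rw [h.val_neg' h.one_ne_zero']
    congr 1
    have := h.val_cast_lt (m := 1) (by have := h.hn; omega)
    simpa using this
  simp only [cd, hv]; have := h.hn; omega

lemma cd_cast (h : Setup G n vs) {d : ℕ} (hd : d < n) : cd n ((d : ZMod n)) = min d (n - d) := by
  rw [cd, h.val_cast_lt hd]

/-- Potential step along an edge. -/
lemma phi_step (h : Setup G n vs) {u w : V} (hadj : G.Adj u w) :
    phi vs w - phi vs u = 0 ∨ phi vs w - phi vs u = 1 ∨ phi vs w - phi vs u = -1 := by
  by_cases hu : u ∈ Set.range vs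
  · obtain ⟨i, rfl⟩ := hu
    by_cases hi : i = 0
    · subst hi
      by_cases hw : w ∈ Set.range vs
      · obtain ⟨j, rfl⟩ := hw
        rcases h.adj_b hadj with rfl | rfl
        · right; left; rw [h.phi_vs, h.phi_vs]; ring
        · right; right; rw [h.phi_vs, h.phi_vs]; ring
      · left; rw [h.phi_nmem hw, h.phi_vs]; ring
    · rcases h.adj_cycle_vertex hi hadj with rfl | rfl
      · right; right; rw [h.phi_vs, h.phi_vs]; ring
      · right; left; rw [h.phi_vs, h.phi_vs]; ring
  · by_cases hw : w ∈ Set.range vs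
    · have := h.entry_at_b hu hadj hw
      left; rw [this, h.phi_vs, h.phi_nmem hu]; ring
    · left; rw [h.phi_nmem hw, h.phi_nmem hu]; ring

/-- The fundamental lower bound: any walk is at least as long as the circular
distance between the potentials of its endpoints. -/
lemma walk_ge (h : Setup G n vs) {u w : V} (p : G.Walk u w) :
    cd n (phi vs w - phi vs u) ≤ p.length := by
  induction p with
  | nil => simp [h.cd_zero]
  | @cons a b' c' hadj q ih =>
    have key : cd n (phi vs c' - phi vs a) ≤
        cd n (phi vs c' - phi vs b') + cd n (phi vs b' - phi vs a) := by
      have := h.cd_triangle (phi vs c' - phi vs b') (phi vs b' - phi vs a)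
      rwa [sub_add_sub_cancel] at this
    have hstep : cd n (phi vs b' - phi vs a) ≤ 1 := by
      rcases h.phi_step hadj with h1 | h1 | h1 <;> rw [h1]
      · rw [h.cd_zero]; omega
      · rw [h.cd_one]
      · rw [h.cd_neg_one]
    simp only [Walk.length_cons]
    omega

/-- Explicit arcs along the cycle. -/
def arcWalk (hadj : ∀ i : ZMod n, G.Adj (vs i) (vs (i + 1))) (i : ZMod n) :
    (d : ℕ) → G.Walk (vs i) (vs (i + d))
  | 0 => Walk.nil.copy rfl (by norm_num)
  | d + 1 => ((arcWalk hadj i d).concat (by exact hadj (i + d))).copy rfl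
      (by push_cast; ring_nf)

lemma arcWalk_length (hadj : ∀ i : ZMod n, G.Adj (vs i) (vs (i + 1))) (i : ZMod n) (d : ℕ) :
    (arcWalk hadj i d).length = d := by
  induction d with
  | zero => simp [arcWalk]
  | succ d ih => simp [arcWalk, Walk.length_copy, Walk.length_concat, ih]

lemma arcWalk_support (hadj : ∀ i : ZMod n, G.Adj (vs i) (vs (i + 1))) (i : ZMod n) (d : ℕ) :
    (arcWalk hadj i d).support = (List.range (d + 1)).map (fun m : ℕ => vs (i + (m : ZMod n))) := by
  induction d with
  | zero => simp [arcWalk, List.range_succ]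
  | succ d ih =>
    rw [arcWalk, Walk.support_copy, Walk.support_concat, ih]
    have hr : List.range (d + 1 + 1) = List.range (d + 1) ++ [d + 1] := by
      rw [List.range_succ]
    rw [hr, List.map_append]
    simp only [List.map_cons, List.map_nil, List.append_assoc, List.cons_append, List.nil_append,
      List.append_cancel_left_eq, List.cons.injEq, and_true]
    congr 1
    push_cast; ring

lemma arcWalk_edges (hadj : ∀ i : ZMod n, G.Adj (vs i) (vs (i + 1))) (i : ZMod n) (d : ℕ) :
    (arcWalk hadj i d).edges =
      (List.range d).map (fun m : ℕ => s(vs (i + (m : ZMod n)), vs (i + (m : ZMod n) + 1))) := by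
  induction d with
  | zero => simp [arcWalk]
  | succ d ih =>
    rw [arcWalk, Walk.edges_copy, Walk.edges_concat, ih, List.range_succ, List.map_append,
      List.concat_eq_append]
    simp

lemma arcWalk_isPath (h : Setup G n vs) (i : ZMod n) {d : ℕ} (hd : d < n) :
    (arcWalk h.hadj i d).IsPath := by
  rw [Walk.isPath_def, arcWalk_support]
  refine List.Nodup.map_on ?_ List.nodup_range
  intro m1 hm1 m2 hm2 he
  rw [List.mem_range] at hm1 hm2
  have h3 := h.hinj he
  have h4 : (m1 : ZMod n) = m2 := by linear_combination h3 - i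
  have h1 := h.val_cast_lt (show m1 < n by omega)
  have h2 := h.val_cast_lt (show m2 < n by omega)
  rw [← h1, ← h2, h4]

/-- Distance between cycle vertices equals circular distance. -/
lemma dist_vs (h : Setup G n vs) (i j : ZMod n) : G.dist (vs i) (vs j) = cd n (j - i) := by
  haveI := h.nz
  refine le_antisymm ?_ ?_
  · by_cases hij : i = j
    · subst hij; simp [h.cd_zero]
    · have hne : j - i ≠ 0 := fun h0 => hij (by linear_combination -h0)
      rcases le_or_gt ((j - i).val) (n - (j - i).val) with hle | hlt
      · have : cd n (j - i) = (j - i).val := by rw [cd]; omega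
        rw [this]
        have hend : i + ((j - i).val : ZMod n) = j := by
          rw [h.cast_val]; ring
        have hw := dist_le (arcWalk h.hadj i ((j - i).val))
        rwa [arcWalk_length, hend] at hw
      · have hv : (i - j).val = n - (j - i).val := by
          have : i - j = -(j - i) := by ring
          rw [this, h.val_neg' hne]
        have : cd n (j - i) = (i - j).val := by rw [cd]; omega
        rw [this]
        have hend : j + ((i - j).val : ZMod n) = i := by
          rw [h.cast_val]; ring
        have hw := dist_le (arcWalk h.hadj j ((i - j).val))
        rw [arcWalk_length, hend] at hw
        rw [SimpleGraph.dist_comm]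
        exact hw
  · obtain ⟨p, _, hlen⟩ := h.hconn.exists_path_of_dist (vs i) (vs j)
    have := h.walk_ge p
    rw [h.phi_vs, h.phi_vs] at this
    have heq : j - i = phi vs (vs j) - phi vs (vs i) := by rw [h.phi_vs, h.phi_vs]
    omega


/-! ### Structure of walks relative to the cycle -/

/-- Any walk from outside the cycle into the cycle passes through the branch vertex. -/
lemma b_mem_walk (h : Setup G n vs) {u w : V} (p : G.Walk u w) (hu : u ∉ Set.range vs)
    (hw : w ∈ Set.range vs) : vs 0 ∈ p.support := by
  induction p with
  | nil => exact absurd hw hu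
  | @cons a b' c' hadj q ih =>
    by_cases hb' : b' ∈ Set.range vs
    · have := h.entry_at_b hu hadj hb'
      rw [Walk.support_cons]
      exact List.mem_cons_of_mem _ (this ▸ q.start_mem_support)
    · rw [Walk.support_cons]
      exact List.mem_cons_of_mem _ (ih hb' hw)

/-- Helper: on a path, the branch vertex cannot occur both weakly before and
weakly after an intermediate vertex different from it. -/
lemma nodup_split (h : Setup G n vs) {x y z : V} {p : G.Walk x y} (hp : p.IsPath)
    (hz : z ∈ p.support) (hne : vs 0 ≠ z)
    (hb1 : vs 0 ∈ (p.takeUntil z hz).support)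
    (hb2 : vs 0 ∈ (p.dropUntil z hz).support) : False := by
  have hsplit := p.take_spec hz
  have hnodup : p.support.Nodup := hp.support_nodup
  rw [← hsplit, Walk.support_append, List.nodup_append] at hnodup
  have htail : vs 0 ∈ (p.dropUntil z hz).support.tail := by
    have := (p.dropUntil z hz).support_eq_cons
    rw [this] at hb2
    rcases List.mem_cons.mp hb2 with h1 | h1
    · exact absurd h1 hne
    · exact h1
  exact hnodup.2.2 _ hb1 _ htail rfl

/-- A path whose endpoints are off the cycle or equal to the branch vertex avoids
all non-branch cycle vertices. -/
lemma path_avoids_cycle (h : Setup G n vs) {x y : V} {p : G.Walk x y} (hp : p.IsPath)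
    (hx : x ∉ Set.range vs ∨ x = vs 0) (hy : y ∉ Set.range vs ∨ y = vs 0) :
    ∀ z ∈ p.support, z ∉ Set.range vs ∨ z = vs 0 := by
  intro z hz
  by_contra hcon
  push_neg at hcon
  obtain ⟨hzC, hzb⟩ := hcon
  have hne : vs 0 ≠ z := fun h' => hzb h'.symm
  refine h.nodup_split hp hz hne ?_ ?_
  · rcases hx with hx | rfl
    · exact h.b_mem_walk _ hx hzC
    · exact (p.takeUntil z hz).start_mem_support
  · rcases hy with hy | rfl
    · have := h.b_mem_walk (p.dropUntil z hz).reverse hy hzC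
      rwa [Walk.support_reverse, List.mem_reverse] at this
    · exact (p.dropUntil z hz).end_mem_support

/-- A path between two cycle vertices stays on the cycle. -/
lemma path_in_cycle (h : Setup G n vs) {x y : V} {p : G.Walk x y} (hp : p.IsPath)
    (hx : x ∈ Set.range vs) (hy : y ∈ Set.range vs) :
    ∀ z ∈ p.support, z ∈ Set.range vs := by
  intro z hz
  by_contra hzC
  have hne : vs 0 ≠ z := fun h' => hzC (h' ▸ h.b_mem_C)
  refine h.nodup_split hp hz hne ?_ ?_
  · have := h.b_mem_walk (p.takeUntil z hz).reverse hzC hx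
    rwa [Walk.support_reverse, List.mem_reverse] at this
  · exact h.b_mem_walk (p.dropUntil z hz) hzC hy

/-- A walk avoiding non-branch cycle vertices uses no cycle edges. -/
lemma edges_not_CE (h : Setup G n vs) {x y : V} {p : G.Walk x y}
    (hsupp : ∀ z ∈ p.support, z ∉ Set.range vs ∨ z = vs 0) :
    ∀ e ∈ p.edges, e ∉ CE vs := by
  intro e he heCE
  obtain ⟨i, hi, hmem⟩ := h.CE_endpoints heCE
  have hsup : vs i ∈ p.support := by
    induction e with
    | _ a b' =>
      rcases Sym2.mem_iff.mp hmem with rfl | rfl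
      · exact p.fst_mem_support_of_mem_edges he
      · exact p.snd_mem_support_of_mem_edges he
  rcases hsupp _ hsup with h1 | h1
  · exact h1 ⟨i, rfl⟩
  · exact hi (h.hinj h1)

/-- A walk staying on the cycle uses only cycle edges. -/
lemma edges_in_CE (h : Setup G n vs) {x y : V} {p : G.Walk x y}
    (hsupp : ∀ z ∈ p.support, z ∈ Set.range vs) :
    ∀ e ∈ p.edges, e ∈ CE vs := by
  intro e he
  have hadj : e ∈ G.edgeSet := p.edges_subset_edgeSet he
  induction e with
  | _ a b' =>
    obtain ⟨i, rfl⟩ := hsupp a (p.fst_mem_support_of_mem_edges he)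
    obtain ⟨j, rfl⟩ := hsupp b' (p.snd_mem_support_of_mem_edges he)
    exact h.edge_of_C hadj

/-- Forced-edge lemma: a walk between cycle vertices of length equal to a short
circular distance must contain every edge of the corresponding arc. -/
lemma forced (h : Setup G n vs) : ∀ d : ℕ, 2 * d < n → ∀ i : ZMod n,
    ∀ p : G.Walk (vs i) (vs (i + (d : ZMod n))), p.length = d →
    ∀ m : ℕ, m < d → s(vs (i + (m : ZMod n)), vs (i + (m : ZMod n) + 1)) ∈ p.edges := by
  intro d
  induction d with
  | zero => intro _ _ _ _ m hm; omega
  | succ d ih =>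
    intro hdn i p hlen m hm
    haveI := h.nz
    have hnil : ¬ p.Nil := by
      intro hn
      rw [Walk.nil_iff_length_eq] at hn
      omega
    obtain ⟨u1, hadj, q, rfl⟩ := Walk.not_nil_iff.mp hnil
    rw [Walk.length_cons] at hlen
    by_cases hu1 : u1 ∈ Set.range vs
    · obtain ⟨k, rfl⟩ := hu1
      have hk : k = i + 1 ∨ k = i - 1 := by
        by_cases hi : i = 0
        · subst hi
          rcases h.adj_b hadj with rfl | rfl
          · left; ring
          · right; ring
        · rcases h.adj_cycle_vertex hi hadj with h1 | h1
          · right; exact h.hinj h1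
          · left; exact h.hinj h1
      rcases hk with rfl | rfl
      · -- forward step
        rcases Nat.eq_zero_or_pos m with rfl | hmpos
        · rw [show ((0 : ℕ) : ZMod n) = 0 from Nat.cast_zero, add_zero, Walk.edges_cons]
          exact List.mem_cons_self
        · have hq : q.length = d := by omega
          have hcast : vs (i + ((d + 1 : ℕ) : ZMod n)) = vs ((i + 1) + ((d : ℕ) : ZMod n)) := by
            congr 1; push_cast; ring
          have hmem := ih (by omega) (i + 1) (q.copy rfl hcast)
            (by rw [Walk.length_copy]; exact hq) (m - 1) (by omega)
          rw [Walk.edges_copy] at hmem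
          have e1 : (i + 1) + ((m - 1 : ℕ) : ZMod n) = i + (m : ZMod n) := by
            have : ((m - 1 : ℕ) : ZMod n) = (m : ZMod n) - 1 := by
              push_cast [Nat.cast_sub hmpos]; ring
            rw [this]; ring
          rw [e1] at hmem
          rw [Walk.edges_cons]
          exact List.mem_cons_of_mem _ hmem
      · -- backward step: contradiction via potential bound
        exfalso
        have hb := h.walk_ge q
        rw [h.phi_vs, h.phi_vs] at hb
        have hδ : i + ((d + 1 : ℕ) : ZMod n) - (i - 1) = ((d + 2 : ℕ) : ZMod n) := by
          push_cast; ring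
        rw [hδ] at hb
        rw [h.cd_cast (show d + 2 < n by omega)] at hb
        omega
    · -- first step leaves the cycle: start must be the branch vertex
      have hib : i = 0 := by
        by_contra hi
        rcases h.adj_cycle_vertex hi hadj with h1 | h1 <;> exact hu1 ⟨_, h1.symm⟩
      subst hib
      exfalso
      have hbq : vs 0 ∈ q.support := h.b_mem_walk q hu1 ⟨_, rfl⟩
      have hlen2 : (q.takeUntil _ hbq).length + (q.dropUntil _ hbq).length = q.length := by
        have := congrArg Walk.length (q.take_spec hbq)
        rwa [Walk.length_append] at this
      have h1 : 1 ≤ (q.takeUntil _ hbq).length := by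
        rcases Nat.eq_zero_or_pos (q.takeUntil _ hbq).length with h0 | h0
        · exact absurd ⟨0, ((q.takeUntil _ hbq).eq_of_length_eq_zero h0).symm⟩ hu1
        · exact h0
      have h2 : d + 1 ≤ (q.dropUntil _ hbq).length := by
        have hdl := dist_le (q.dropUntil _ hbq)
        have hdist := h.dist_vs 0 (0 + ((d + 1 : ℕ) : ZMod n))
        have hcd : cd n (0 + ((d + 1 : ℕ) : ZMod n) - 0) = d + 1 := by
          rw [show (0 + ((d + 1 : ℕ) : ZMod n) - 0) = ((d + 1 : ℕ) : ZMod n) by ring,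
            h.cd_cast (by omega)]
          omega
        rw [hdist, hcd] at hdl
        exact hdl
      omega


/-! ### Forest paths -/

lemma F_path_unique (h : Setup G n vs) {x y : V} (p q : (G.deleteEdges (CE vs)).Walk x y)
    (hp : p.IsPath) (hq : q.IsPath) : p = q := by
  have := isAcyclic_iff_path_unique.mp h.hacyc ⟨p, hp⟩ ⟨q, hq⟩
  exact congrArg Subtype.val this

lemma CE_mem_range (h : Setup G n vs) {e : Sym2 V} (he : e ∈ CE vs) :
    ∀ v ∈ e, v ∈ Set.range vs := by
  obtain ⟨i, rfl⟩ := he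
  intro v hv
  rcases Sym2.mem_iff.mp hv with rfl | rfl
  · exact ⟨i, rfl⟩
  · exact ⟨i + 1, rfl⟩

lemma F_adj (h : Setup G n vs) {α β : V} (hadj : G.Adj α β) (hα : α ∉ Set.range vs) :
    (G.deleteEdges (CE vs)).Adj α β := by
  rw [deleteEdges_adj]
  exact ⟨hadj, fun hce => hα (h.CE_mem_range hce α (Sym2.mem_mk_left _ _))⟩

lemma exists_Fpath (h : Setup G n vs) {x : V} (hx : x ∉ Set.range vs) :
    ∃ q : (G.deleteEdges (CE vs)).Walk (vs 0) x, q.IsPath ∧ q.length = G.dist x (vs 0) ∧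
      ∀ z ∈ q.support, z ∉ Set.range vs ∨ z = vs 0 := by
  obtain ⟨p, hp, hlen⟩ := h.hconn.exists_path_of_dist x (vs 0)
  have hav := h.path_avoids_cycle hp (Or.inl hx) (Or.inr rfl)
  have hedges : ∀ e ∈ p.edges, e ∈ (G.deleteEdges (CE vs)).edgeSet := by
    intro e he
    rw [edgeSet_deleteEdges]
    exact ⟨p.edges_subset_edgeSet he, h.edges_not_CE hav e he⟩
  refine ⟨(p.transfer _ hedges).reverse, (hp.transfer _).reverse, ?_, ?_⟩
  · rw [Walk.length_reverse, Walk.length_transfer, hlen]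
  · intro z hz
    rw [Walk.support_reverse, List.mem_reverse, Walk.support_transfer] at hz
    exact hav z hz

noncomputable def Fp (h : Setup G n vs) {x : V} (hx : x ∉ Set.range vs) :
    (G.deleteEdges (CE vs)).Walk (vs 0) x := (h.exists_Fpath hx).choose

lemma Fp_isPath (h : Setup G n vs) {x : V} (hx : x ∉ Set.range vs) : (h.Fp hx).IsPath :=
  (h.exists_Fpath hx).choose_spec.1

lemma Fp_length (h : Setup G n vs) {x : V} (hx : x ∉ Set.range vs) :
    (h.Fp hx).length = G.dist x (vs 0) := (h.exists_Fpath hx).choose_spec.2.1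

lemma Fp_support (h : Setup G n vs) {x : V} (hx : x ∉ Set.range vs) :
    ∀ z ∈ (h.Fp hx).support, z ∉ Set.range vs ∨ z = vs 0 :=
  (h.exists_Fpath hx).choose_spec.2.2

lemma Fp_unique (h : Setup G n vs) {x : V} (hx : x ∉ Set.range vs)
    {q : (G.deleteEdges (CE vs)).Walk (vs 0) x} (hq : q.IsPath) : q = h.Fp hx :=
  h.F_path_unique _ _ hq (h.Fp_isPath hx)

/-- Any `G`-path from a vertex off the cycle to the branch vertex has the same edges
as the canonical forest path. -/
lemma path_to_b_edges (h : Setup G n vs) {x : V} (hx : x ∉ Set.range vs)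
    {p1 : G.Walk x (vs 0)} (hp : p1.IsPath) :
    ∀ e, e ∈ p1.edges ↔ e ∈ (h.Fp hx).edges := by
  have hav := h.path_avoids_cycle hp (Or.inl hx) (Or.inr rfl)
  have hedges : ∀ e ∈ p1.edges, e ∈ (G.deleteEdges (CE vs)).edgeSet := by
    intro e he
    rw [edgeSet_deleteEdges]
    exact ⟨p1.edges_subset_edgeSet he, h.edges_not_CE hav e he⟩
  have heq := h.Fp_unique hx (q := (p1.transfer _ hedges).reverse) (hp.transfer _).reverse
  intro e
  rw [← heq, Walk.edges_reverse, List.mem_reverse, Walk.edges_transfer]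

/-- Any `G`-path from a vertex off the cycle to the branch vertex is a shortest path. -/
lemma path_to_b_length (h : Setup G n vs) {x : V} (hx : x ∉ Set.range vs)
    {p1 : G.Walk x (vs 0)} (hp : p1.IsPath) : p1.length = G.dist x (vs 0) := by
  have hav := h.path_avoids_cycle hp (Or.inl hx) (Or.inr rfl)
  have hedges : ∀ e ∈ p1.edges, e ∈ (G.deleteEdges (CE vs)).edgeSet := by
    intro e he
    rw [edgeSet_deleteEdges]
    exact ⟨p1.edges_subset_edgeSet he, h.edges_not_CE hav e he⟩
  have heq := h.Fp_unique hx (q := (p1.transfer _ hedges).reverse) (hp.transfer _).reverse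
  have := congrArg Walk.length heq
  rw [Walk.length_reverse, Walk.length_transfer, h.Fp_length hx] at this
  exact this

/-- Above every vertex off the cycle there is a leaf whose forest path contains the
given vertex's forest path. -/
lemma exists_leaf_above (h : Setup G n vs) {x : V} (hx : x ∉ Set.range vs) :
    ∃ ℓ, ∃ hℓ : ℓ ∉ Set.range vs, ℓ ∈ leaves G ∧
      ∀ e ∈ (h.Fp hx).edges, e ∈ (h.Fp hℓ).edges := by
  suffices key : ∀ N : ℕ, ∀ x : V, ∀ hx : x ∉ Set.range vs,
      Fintype.card V - (h.Fp hx).length ≤ N → ∃ ℓ, ∃ hℓ : ℓ ∉ Set.range vs, ℓ ∈ leaves G ∧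
      ∀ e ∈ (h.Fp hx).edges, e ∈ (h.Fp hℓ).edges by
    exact key _ x hx le_rfl
  intro N
  induction N with
  | zero =>
    intro x hx hN
    exact absurd (h.Fp_isPath hx).length_lt (by omega)
  | succ N ih =>
    intro x hx hN
    by_cases hleaf : (G.neighborSet x).ncard = 1
    · exact ⟨x, hx, hleaf, fun e he => he⟩
    · have hxb : x ≠ vs 0 := fun h' => hx (h' ▸ ⟨0, rfl⟩)
      have hnil : ¬ (h.Fp hx).reverse.Nil := Walk.not_nil_of_ne hxb
      obtain ⟨u, hadj', q, hr⟩ := Walk.not_nil_iff.mp hnil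
      have hadjGu : G.Adj x u := (deleteEdges_le (CE vs)) hadj'
      have hu_mem : u ∈ G.neighborSet x := hadjGu
      have h1lt : 1 < (G.neighborSet x).ncard := by
        have h0 : 0 < (G.neighborSet x).ncard := (Set.ncard_pos (Set.toFinite _)).mpr ⟨u, hu_mem⟩
        omega
      obtain ⟨w', hw', hwne⟩ := (G.neighborSet x).exists_ne_of_one_lt_ncard h1lt u
      have hadjw : G.Adj x w' := hw'
      by_cases hw'C : w' ∈ Set.range vs
      · -- the other neighbour is on the cycle, hence is the branch vertex
        exfalso
        have hw'b : w' = vs 0 := h.entry_at_b hx hadjw hw'C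
        subst hw'b
        have hFadj : (G.deleteEdges (CE vs)).Adj (vs 0) x := (h.F_adj hadjw hx).symm
        have hsingle : (Walk.cons hFadj Walk.nil).IsPath := by
          rw [Walk.cons_isPath_iff]
          exact ⟨Walk.IsPath.nil, by simpa using hxb.symm⟩
        have heq := h.Fp_unique hx hsingle
        have hlen1 : (h.Fp hx).length = 1 := by
          rw [← heq]; simp
        have hrl := congrArg Walk.length hr
        rw [Walk.length_reverse, hlen1, Walk.length_cons] at hrl
        have : q.length = 0 := by omega
        have hub : u = vs 0 := q.eq_of_length_eq_zero this
        exact hwne hub.symm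
      · have hFadjw : (G.deleteEdges (CE vs)).Adj x w' := h.F_adj hadjw hx
        by_cases hw'supp : w' ∈ (h.Fp hx).support
        · -- w' already on the forest path: forces w' = u, contradiction
          exfalso
          have hw'x : w' ≠ x := fun h' => G.irrefl (h' ▸ hadjw)
          have hdrop := (h.Fp_isPath hx).dropUntil hw'supp
          have hsingle : (Walk.cons hFadjw.symm Walk.nil).IsPath := by
            rw [Walk.cons_isPath_iff]
            exact ⟨Walk.IsPath.nil, by simpa using hw'x⟩
          have heq := h.F_path_unique _ _ hdrop hsingle
          have hemem : s(w', x) ∈ (h.Fp hx).edges := by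
            have : s(w', x) ∈ ((h.Fp hx).dropUntil w' hw'supp).edges := by
              rw [heq]; simp
            exact (h.Fp hx).edges_dropUntil_subset hw'supp this
          -- the only edge of the forest path incident to x is the last one
          have hrev : s(w', x) ∈ ((h.Fp hx).reverse).edges := by
            rw [Walk.edges_reverse, List.mem_reverse]; exact hemem
          rw [hr, Walk.edges_cons] at hrev
          rcases List.mem_cons.mp hrev with h2 | h2
          · rw [Sym2.eq_iff] at h2
            rcases h2 with ⟨rfl, _⟩ | ⟨h3, _⟩
            · exact G.irrefl hadjw
            · exact hwne h3
          · have hxq : x ∈ q.support := q.fst_mem_support_of_mem_edges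
              (by rwa [Sym2.eq_swap] at h2)
            have hrpath : (h.Fp hx).reverse.IsPath := (h.Fp_isPath hx).reverse
            rw [hr, Walk.cons_isPath_iff] at hrpath
            exact hrpath.2 hxq
        · -- extend the forest path to w'
          have hcons : (Walk.cons hFadjw.symm (h.Fp hx).reverse).IsPath := by
            rw [Walk.cons_isPath_iff]
            refine ⟨(h.Fp_isPath hx).reverse, ?_⟩
            rw [Walk.support_reverse, List.mem_reverse]
            exact hw'supp
          have hc' : ((Walk.cons hFadjw.symm (h.Fp hx).reverse).reverse).IsPath := hcons.reverse
          have heq := h.Fp_unique hw'C hc'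
          have hlenw : (h.Fp hw'C).length = (h.Fp hx).length + 1 := by
            rw [← heq]
            simp [Walk.length_reverse, Walk.length_cons]
          have hedgew : ∀ e ∈ (h.Fp hx).edges, e ∈ (h.Fp hw'C).edges := by
            intro e he
            have hmem : e ∈ (Walk.cons hFadjw.symm (h.Fp hx).reverse).edges := by
              rw [Walk.edges_cons]
              right
              rw [Walk.edges_reverse]
              exact List.mem_reverse.mpr he
            rw [← heq, Walk.edges_reverse, List.mem_reverse]
            exact hmem
          have hcard : Fintype.card V - (h.Fp hw'C).length ≤ N := by
            have := (h.Fp_isPath hw'C).length_lt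
            omega
          obtain ⟨ℓ, hℓ, hleaf, hsub⟩ := ih w' hw'C hcard
          exact ⟨ℓ, hℓ, hleaf, fun e he => hsub e (hedgew e he)⟩


lemma leaves_off_cycle (h : Setup G n vs) {ℓ : V} (hℓ : ℓ ∈ leaves G) : ℓ ∉ Set.range vs := by
  rintro ⟨i, rfl⟩
  have h1 : (G.neighborSet (vs i)).ncard = 1 := hℓ
  by_cases hi : i = 0
  · subst hi
    have := h.hb3
    omega
  · rw [h.hdeg i hi] at h1
    have hne : vs (i - 1) ≠ vs (i + 1) := by
      intro he
      have := h.hinj he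
      apply h.two_ne_zero'
      linear_combination -this
    rw [Set.ncard_pair hne] at h1
    omega

lemma exists_offcycle_nbr (h : Setup G n vs) : ∃ w, w ∉ Set.range vs ∧ G.Adj (vs 0) w := by
  by_contra hcon
  push_neg at hcon
  have hsub : G.neighborSet (vs 0) ⊆ {vs 1, vs (-1)} := by
    intro w hw
    have hwC : w ∈ Set.range vs := by
      by_contra hwC
      exact (hcon w hwC) hw
    obtain ⟨j, rfl⟩ := hwC
    rcases h.adj_b hw with rfl | rfl
    · exact Or.inl rfl
    · exact Or.inr rfl
  have := Set.ncard_le_ncard hsub (Set.toFinite _)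
  have h2 : ({vs 1, vs (-1)} : Set V).ncard ≤ 2 := by
    have := Set.ncard_insert_le (vs 1) ({vs (-1)} : Set V)
    simpa using this
  have := h.hb3
  omega

lemma exists_leaf (h : Setup G n vs) : ∃ ℓ, ∃ _ : ℓ ∉ Set.range vs, ℓ ∈ leaves G := by
  obtain ⟨w, hw, _⟩ := h.exists_offcycle_nbr
  obtain ⟨ℓ, hℓ, hlf, _⟩ := h.exists_leaf_above hw
  exact ⟨ℓ, hℓ, hlf⟩

/-- Every edge of `G` is a cycle edge or lies on the forest path of some off-cycle vertex. -/
lemma edge_class (h : Setup G n vs) {e : Sym2 V} (he : e ∈ G.edgeSet) :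
    e ∈ CE vs ∨ ∃ x, ∃ hx : x ∉ Set.range vs, e ∈ (h.Fp hx).edges := by
  have key : ∀ α β : V, G.Adj α β → β ∉ Set.range vs →
      ∃ x, ∃ hx : x ∉ Set.range vs, s(α, β) ∈ (h.Fp hx).edges := by
    intro α β hadj hβ
    by_cases hα : α ∈ Set.range vs
    · have hab : α = vs 0 := h.entry_at_b hβ hadj.symm hα
      subst hab
      have hFadj : (G.deleteEdges (CE vs)).Adj (vs 0) β := (h.F_adj hadj.symm hβ).symm
      have hβ0 : β ≠ vs 0 := fun h' => G.irrefl (h' ▸ hadj)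
      have hsingle : (Walk.cons hFadj Walk.nil).IsPath := by
        rw [Walk.cons_isPath_iff]
        exact ⟨Walk.IsPath.nil, by simpa using hβ0.symm⟩
      have heq := h.Fp_unique hβ hsingle
      exact ⟨β, hβ, by rw [← heq]; simp⟩
    · have hFadj : (G.deleteEdges (CE vs)).Adj α β := h.F_adj hadj hα
      by_cases hαsupp : α ∈ (h.Fp hβ).support
      · have hαβ : α ≠ β := hadj.ne
        have hdrop := (h.Fp_isPath hβ).dropUntil hαsupp
        have hsingle : (Walk.cons hFadj Walk.nil).IsPath := by
          rw [Walk.cons_isPath_iff]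
          exact ⟨Walk.IsPath.nil, by simpa using hαβ⟩
        have heq := h.F_path_unique _ _ hdrop hsingle
        refine ⟨β, hβ, ?_⟩
        have : s(α, β) ∈ ((h.Fp hβ).dropUntil α hαsupp).edges := by
          rw [heq]; simp
        exact (h.Fp hβ).edges_dropUntil_subset hαsupp this
      · have hcons : (Walk.cons hFadj (h.Fp hβ).reverse).IsPath := by
          rw [Walk.cons_isPath_iff]
          refine ⟨(h.Fp_isPath hβ).reverse, ?_⟩
          rw [Walk.support_reverse, List.mem_reverse]
          exact hαsupp
        have heq := h.Fp_unique hα hcons.reverse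
        refine ⟨α, hα, ?_⟩
        rw [← heq, Walk.edges_reverse]
        refine List.mem_reverse.mpr ?_
        rw [Walk.edges_cons]
        left
  induction e with
  | _ α β =>
    rw [SimpleGraph.mem_edgeSet] at he
    by_cases hα : α ∈ Set.range vs
    · by_cases hβ : β ∈ Set.range vs
      · obtain ⟨i, rfl⟩ := hα
        obtain ⟨j, rfl⟩ := hβ
        exact Or.inl (h.edge_of_C he)
      · exact Or.inr (key α β he hβ)
    · right
      obtain ⟨x, hx, hmem⟩ := key β α he.symm hα
      exact ⟨x, hx, by rwa [Sym2.eq_swap] at hmem⟩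

/-- Distance from an off-cycle vertex to a cycle vertex splits through the branch vertex. -/
lemma dist_split (h : Setup G n vs) {x : V} (hx : x ∉ Set.range vs) (j : ZMod n) :
    G.dist x (vs j) = G.dist x (vs 0) + cd n j := by
  have hcd : cd n (j - 0) = cd n j := by norm_num
  refine le_antisymm ?_ ?_
  · have htri := h.hconn.dist_triangle (u := x) (v := vs 0) (w := vs j)
    have := h.dist_vs 0 j
    rw [this, hcd] at htri
    exact htri
  · obtain ⟨p, hp, hlen⟩ := h.hconn.exists_path_of_dist x (vs j)
    have hb : vs 0 ∈ p.support := h.b_mem_walk p hx ⟨j, rfl⟩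
    have hsplit := congrArg Walk.length (p.take_spec hb)
    rw [Walk.length_append] at hsplit
    have h1 := dist_le (p.takeUntil _ hb)
    have h2 := dist_le (p.dropUntil _ hb)
    rw [h.dist_vs 0 j, hcd] at h2
    omega

/-- Splitting a shortest path from an off-cycle vertex to a cycle vertex at the branch. -/
lemma split_shortest (h : Setup G n vs) {x : V} (hx : x ∉ Set.range vs) (j : ZMod n)
    {p : G.Walk x (vs j)} (hp : p.IsPath) (hlen : p.length = G.dist x (vs j)) :
    ∃ (p1 : G.Walk x (vs 0)) (p2 : G.Walk (vs 0) (vs j)),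
      (∀ e ∈ p1.edges, e ∈ p.edges) ∧ (∀ e ∈ p2.edges, e ∈ p.edges) ∧
      p1.IsPath ∧ p2.IsPath ∧ p1.length = G.dist x (vs 0) ∧ p2.length = cd n j := by
  have hb : vs 0 ∈ p.support := h.b_mem_walk p hx ⟨j, rfl⟩
  refine ⟨p.takeUntil _ hb, p.dropUntil _ hb, ?_, ?_, hp.takeUntil hb, hp.dropUntil hb, ?_, ?_⟩
  · exact fun e he => p.edges_takeUntil_subset hb he
  · exact fun e he => p.edges_dropUntil_subset hb he
  · exact h.path_to_b_length hx (hp.takeUntil hb)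
  · have hsplit := congrArg Walk.length (p.take_spec hb)
    rw [Walk.length_append] at hsplit
    have h1 := h.path_to_b_length hx (hp.takeUntil hb)
    have h2 := dist_le (p.dropUntil _ hb)
    have hd := h.dist_split hx j
    have hcd : cd n (j - 0) = cd n j := by norm_num
    rw [h.dist_vs 0 j, hcd] at h2
    omega


/-! ### Monitoring lemmas (upper bound) -/

lemma cd_cast_short (h : Setup G n vs) {d : ℕ} (hd : 2 * d < n) :
    cd n ((d : ZMod n)) = d := by
  rw [h.cd_cast (by omega)]; omega

lemma cd_neg_cast_short (h : Setup G n vs) {d : ℕ} (hd : 2 * d < n) (hd1 : 0 < d) :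
    cd n (-((d : ℕ) : ZMod n)) = d := by
  have hne : ((d : ℕ) : ZMod n) ≠ 0 := by
    intro h0
    have := h.natcast_eq_zero (by omega) h0
    omega
  rw [cd, h.val_neg' hne, h.val_cast_lt (by omega)]
  omega

lemma mon_to_cycle (h : Setup G n vs) {x : V} (hx : x ∉ Set.range vs) {d : ℕ}
    (hd : 2 * d < n) (e : Sym2 V)
    (he : e ∈ (h.Fp hx).edges ∨
      ∃ m : ℕ, m < d ∧ e = s(vs ((m : ZMod n)), vs ((m : ZMod n) + 1))) :
    Monitors G x (vs ((d : ZMod n))) e := by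
  constructor
  · exact h.hconn.exists_path_of_dist _ _
  · intro p hp hlen
    obtain ⟨p1, p2, sub1, sub2, hp1, hp2, l1, l2⟩ := h.split_shortest hx ((d : ZMod n)) hp hlen
    rcases he with he | ⟨m, hm, rfl⟩
    · exact sub1 _ ((h.path_to_b_edges hx hp1 e).mpr he)
    · have hl2 : p2.length = d := by rw [l2, h.cd_cast_short hd]
      have hend : vs ((d : ZMod n)) = vs (0 + (d : ZMod n)) := by rw [zero_add]
      have hf := h.forced d hd 0 (p2.copy rfl hend) (by rw [Walk.length_copy]; exact hl2) m hm
      rw [Walk.edges_copy] at hf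
      rw [zero_add] at hf
      exact sub2 _ hf

lemma mon_to_cycle_rev (h : Setup G n vs) {x : V} (hx : x ∉ Set.range vs) {d : ℕ}
    (hd : 2 * d < n) (hd1 : 0 < d) (e : Sym2 V)
    (he : e ∈ (h.Fp hx).edges ∨
      ∃ m : ℕ, m < d ∧
        e = s(vs (-((d : ℕ) : ZMod n) + (m : ZMod n)), vs (-((d : ℕ) : ZMod n) + (m : ZMod n) + 1))) :
    Monitors G x (vs (-((d : ℕ) : ZMod n))) e := by
  constructor
  · exact h.hconn.exists_path_of_dist _ _
  · intro p hp hlen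
    obtain ⟨p1, p2, sub1, sub2, hp1, hp2, l1, l2⟩ :=
      h.split_shortest hx (-((d : ℕ) : ZMod n)) hp hlen
    rcases he with he | ⟨m, hm, rfl⟩
    · exact sub1 _ ((h.path_to_b_edges hx hp1 e).mpr he)
    · have hl2 : p2.reverse.length = d := by
        rw [Walk.length_reverse, l2, h.cd_neg_cast_short hd hd1]
      have hend : vs 0 = vs (-((d : ℕ) : ZMod n) + (d : ZMod n)) := by
        congr 1; ring
      have hf := h.forced d hd (-((d : ℕ) : ZMod n)) (p2.reverse.copy rfl hend)
        (by rw [Walk.length_copy]; exact hl2) m hm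
      rw [Walk.edges_copy, Walk.edges_reverse] at hf
      exact sub2 _ (List.mem_reverse.mp hf)

lemma mon_mid (h : Setup G n vs) {a : ℕ} (ha2 : 2 ≤ a) (han : 2 * a < n) (hna : n - 2 * a ≤ 2)
    (m : ℕ) (hm : m < n - 2 * a) :
    Monitors G (vs ((a : ZMod n))) (vs (-((a : ℕ) : ZMod n)))
      s(vs ((a : ZMod n) + (m : ZMod n)), vs ((a : ZMod n) + (m : ZMod n) + 1)) := by
  have hn := h.hn
  have hdist : G.dist (vs ((a : ZMod n))) (vs (-((a : ℕ) : ZMod n))) = n - 2 * a := by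
    rw [h.dist_vs]
    have heq : -((a : ℕ) : ZMod n) - ((a : ℕ) : ZMod n) = -(((2 * a : ℕ) : ZMod n)) := by
      push_cast; ring
    rw [heq]
    have hne : ((2 * a : ℕ) : ZMod n) ≠ 0 := by
      intro h0
      have := h.natcast_eq_zero (by omega) h0
      omega
    rw [cd, h.val_neg' hne, h.val_cast_lt (by omega)]
    omega
  constructor
  · exact h.hconn.exists_path_of_dist _ _
  · intro p hp hlen
    rw [hdist] at hlen
    have hend : vs (-((a : ℕ) : ZMod n)) = vs ((a : ZMod n) + ((n - 2 * a : ℕ) : ZMod n)) := by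
      congr 1
      rw [Nat.cast_sub (by omega)]
      push_cast [ZMod.natCast_self]
      ring
    have hf := h.forced (n - 2 * a) (by omega) ((a : ZMod n)) (p.copy rfl hend)
      (by rw [Walk.length_copy]; exact hlen) m hm
    rwa [Walk.edges_copy] at hf

/-- The monitoring set for the upper bound. -/
lemma upper_isMEG (h : Setup G n vs) :
    IsMEGSet G (leaves G ∪ {vs (((n - 1) / 2 : ℕ) : ZMod n), vs (-(((n - 1) / 2 : ℕ) : ZMod n))}) := by
  have hn := h.hn
  set a : ℕ := (n - 1) / 2 with ha
  have ha2 : 2 ≤ a := by omega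
  have han : 2 * a < n := by omega
  have hna : n - 2 * a ≤ 2 := by omega
  intro e he
  obtain ⟨ℓ0, hℓ0C, hℓ0⟩ := h.exists_leaf
  rcases h.edge_class he with hce | ⟨x, hx, hmem⟩
  · -- cycle edge
    obtain ⟨i, rfl⟩ := hce
    haveI := h.nz
    have hiv := h.val_lt i
    have hvi : ((i.val : ℕ) : ZMod n) = i := h.cast_val i
    rcases lt_or_ge i.val a with hlt | hge
    · refine ⟨ℓ0, Or.inl hℓ0, vs ((a : ZMod n)), Or.inr (Or.inl rfl), ?_⟩
      refine h.mon_to_cycle hℓ0C han _ (Or.inr ⟨i.val, hlt, ?_⟩)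
      rw [hvi]
    · rcases lt_or_ge i.val (n - a) with hlt2 | hge2
      · -- middle
        refine ⟨vs ((a : ZMod n)), Or.inr (Or.inl rfl), vs (-((a : ℕ) : ZMod n)),
          Or.inr (Or.inr rfl), ?_⟩
        have hieq : (a : ZMod n) + ((i.val - a : ℕ) : ZMod n) = i := by
          calc (a : ZMod n) + ((i.val - a : ℕ) : ZMod n)
              = ((i.val : ℕ) : ZMod n) := by rw [Nat.cast_sub hge]; ring
            _ = i := hvi
        have := h.mon_mid ha2 han hna (i.val - a) (by omega)
        rwa [hieq] at this
      · -- backward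
        refine ⟨ℓ0, Or.inl hℓ0, vs (-((a : ℕ) : ZMod n)), Or.inr (Or.inr rfl), ?_⟩
        refine h.mon_to_cycle_rev hℓ0C han (by omega) _ (Or.inr ⟨i.val - (n - a), by omega, ?_⟩)
        have hieq : -((a : ℕ) : ZMod n) + ((i.val - (n - a) : ℕ) : ZMod n) = i := by
          calc -((a : ℕ) : ZMod n) + ((i.val - (n - a) : ℕ) : ZMod n)
              = ((i.val : ℕ) : ZMod n) - ((n : ℕ) : ZMod n) := by
                rw [Nat.cast_sub hge2, Nat.cast_sub (show a ≤ n by omega)]; ring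
            _ = i := by rw [ZMod.natCast_self, sub_zero, hvi]
        rw [hieq]
  · -- tree edge
    obtain ⟨ℓ, hℓC, hℓ, hsub⟩ := h.exists_leaf_above hx
    refine ⟨ℓ, Or.inl hℓ, vs ((a : ZMod n)), Or.inr (Or.inl rfl), ?_⟩
    exact h.mon_to_cycle hℓC han _ (Or.inl (hsub _ hmem))


/-! ### Lower bound -/

lemma not_monitors_self (G : SimpleGraph V) (x : V) (e : Sym2 V) : ¬ Monitors G x x e := by
  rintro ⟨-, h2⟩
  have := h2 Walk.nil Walk.IsPath.nil (by simp [SimpleGraph.dist_self])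
  simp at this

/-- An interior vertex of a path has at least two neighbours. -/
lemma interior_two {G : SimpleGraph V} {x y v : V} (p : G.Walk x y) (hp : p.IsPath)
    (hv : v ∈ p.support) (hvx : v ≠ x) (hvy : v ≠ y) : 2 ≤ (G.neighborSet v).ncard := by
  induction p with
  | nil =>
    rw [Walk.support_nil] at hv
    exact absurd (List.mem_singleton.mp hv) hvx
  | @cons a b c hadj q ih =>
    rw [Walk.support_cons] at hv
    rcases List.mem_cons.mp hv with rfl | hv2
    · exact absurd rfl hvx
    · by_cases hvb : v = b
      · subst hvb
        have hnil : ¬ q.Nil := Walk.not_nil_of_ne hvy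
        obtain ⟨w2, hadj2, q2, rfl⟩ := Walk.not_nil_iff.mp hnil
        have hpq := hp
        rw [Walk.cons_isPath_iff] at hpq
        have hne : a ≠ w2 := by
          intro hcon
          apply hpq.2
          rw [Walk.support_cons]
          exact List.mem_cons_of_mem _ (hcon ▸ q2.start_mem_support)
        have hsub : ({a, w2} : Set V) ⊆ G.neighborSet v := by
          rintro z (rfl | rfl)
          · exact hadj.symm
          · exact hadj2
        calc 2 = ({a, w2} : Set V).ncard := (Set.ncard_pair hne).symm
          _ ≤ _ := Set.ncard_le_ncard hsub (Set.toFinite _)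
      · have hq : q.IsPath := by
          rw [Walk.cons_isPath_iff] at hp
          exact hp.1
        exact ih hq hv2 hvb hvy

/-- Every leaf belongs to every MEG-set. -/
lemma leaves_subset_of_MEG {G : SimpleGraph V} {S : Set V} (hS : IsMEGSet G S) :
    leaves G ⊆ S := by
  intro v hv
  obtain ⟨u, hu⟩ := Set.ncard_eq_one.mp hv
  have hadj : G.Adj v u := by
    have : u ∈ G.neighborSet v := by rw [hu]; rfl
    exact this
  obtain ⟨x, hxS, y, hyS, hmon⟩ := hS s(v, u) hadj
  obtain ⟨⟨p, hp, hplen⟩, hall⟩ := hmon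
  have hmem := hall p hp hplen
  by_cases hvx : v = x
  · exact hvx ▸ hxS
  by_cases hvy : v = y
  · exact hvy ▸ hyS
  exfalso
  have hsupp : v ∈ p.support := p.fst_mem_support_of_mem_edges hmem
  have h2 := interior_two p hp hsupp hvx hvy
  rw [hv] at h2
  omega


lemma mem_support_of_mem_edges' {G : SimpleGraph V} {x y v : V} (p : G.Walk x y) {e : Sym2 V}
    (he : e ∈ p.edges) (hv : v ∈ e) : v ∈ p.support := by
  induction e with
  | _ a b =>
    rcases Sym2.mem_iff.mp hv with rfl | rfl
    · exact p.fst_mem_support_of_mem_edges he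
    · exact p.snd_mem_support_of_mem_edges he

/-- For each non-branch cycle vertex `vs j` there is a cycle edge `estar` and, for every
off-cycle vertex `x`, a shortest `x`-`(vs j)` path avoiding `estar`. -/
lemma avoid_edge (h : Setup G n vs) {j : ZMod n} (hj : j ≠ 0) :
    ∃ estar : Sym2 V, estar ∈ CE vs ∧ (∃ t : ZMod n, t ≠ 0 ∧ vs t ∈ estar) ∧
      ∀ x, x ∉ Set.range vs →
        ∃ q : G.Walk x (vs j), q.IsPath ∧ q.length = G.dist x (vs j) ∧ estar ∉ q.edges := by
  haveI := h.nz
  have hn := h.hn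
  have hjv : j.val < n := h.val_lt j
  have hjv0 : 0 < j.val := by
    rcases Nat.eq_zero_or_pos j.val with h0 | h0
    · exact absurd (by rwa [ZMod.val_eq_zero] at h0) hj
    · exact h0
  -- a good arc from the branch vertex to `vs j`
  have harc : ∃ estar : Sym2 V, estar ∈ CE vs ∧ (∃ t : ZMod n, t ≠ 0 ∧ vs t ∈ estar) ∧
      ∃ p2 : G.Walk (vs 0) (vs j), p2.IsPath ∧ p2.length = cd n j ∧ estar ∉ p2.edges ∧
        ∀ z ∈ p2.support.tail, ∃ t : ZMod n, t ≠ 0 ∧ z = vs t := by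
    rcases le_or_gt j.val (n - j.val) with hle | hgt
    · -- forward arc, avoided edge s(vs j, vs (j+1))
      refine ⟨s(vs j, vs (j + 1)), ⟨j, rfl⟩, ⟨j, hj, by simp⟩, ?_⟩
      have hend : vs (0 + ((j.val : ℕ) : ZMod n)) = vs j := by
        rw [zero_add, h.cast_val]
      refine ⟨(arcWalk h.hadj 0 j.val).copy rfl hend, ?_, ?_, ?_, ?_⟩
      · rw [Walk.isPath_copy]
        exact h.arcWalk_isPath 0 hjv
      · rw [Walk.length_copy, arcWalk_length, cd]
        omega
      · rw [Walk.edges_copy, arcWalk_edges]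
        intro hmem
        obtain ⟨m, hmr, hme⟩ := List.mem_map.mp hmem
        rw [List.mem_range] at hmr
        rw [zero_add] at hme
        have := h.CE_inj hme.symm
        have hv := h.val_cast_lt (show m < n by omega)
        rw [← this] at hv
        omega
      · rw [Walk.support_copy, arcWalk_support, List.range_succ_eq_map] at *
        intro z hz
        simp only [List.map_cons, List.tail_cons, List.map_map] at hz
        obtain ⟨m, hm, rfl⟩ := List.mem_map.mp hz
        rw [List.mem_range] at hm
        refine ⟨((m + 1 : ℕ) : ZMod n), ?_, by rw [Function.comp_apply, zero_add]⟩
        intro h0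
        have := h.natcast_eq_zero (show m + 1 < n by omega) h0
        omega
    · -- backward arc, avoided edge s(vs (j-1), vs ((j-1)+1))
      have hjv3 : 3 ≤ j.val := by omega
      refine ⟨s(vs (j - 1), vs ((j - 1) + 1)), ⟨j - 1, rfl⟩,
        ⟨j, hj, by rw [show j - 1 + 1 = j by ring]; simp⟩, ?_⟩
      have hend : vs (j + ((n - j.val : ℕ) : ZMod n)) = vs 0 := by
        congr 1
        rw [Nat.cast_sub (le_of_lt hjv), ZMod.natCast_self, h.cast_val]
        ring
      refine ⟨((arcWalk h.hadj j (n - j.val)).copy rfl hend).reverse, ?_, ?_, ?_, ?_⟩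
      · refine Walk.IsPath.reverse ?_
        rw [Walk.isPath_copy]
        exact h.arcWalk_isPath j (by omega)
      · rw [Walk.length_reverse, Walk.length_copy, arcWalk_length, cd]
        omega
      · rw [Walk.edges_reverse, Walk.edges_copy, arcWalk_edges]
        intro hmem
        rw [List.mem_reverse] at hmem
        obtain ⟨m, hmr, hme⟩ := List.mem_map.mp hmem
        rw [List.mem_range] at hmr
        have heq := h.CE_inj hme.symm
        have hm1 : (m : ZMod n) = -1 := by linear_combination -heq
        have hv := h.val_cast_lt (show m < n by omega)
        rw [hm1] at hv
        rw [h.val_neg' h.one_ne_zero'] at hv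
        have hv1 : (1 : ZMod n).val = 1 := by
          have := h.val_cast_lt (m := 1) (by omega)
          simpa using this
        rw [hv1] at hv
        omega
      · rw [Walk.support_reverse, Walk.support_copy, arcWalk_support, List.range_succ,
          List.map_append, List.reverse_append]
        intro z hz
        simp only [List.map_cons, List.map_nil, List.reverse_cons, List.reverse_nil,
          List.nil_append, List.singleton_append, List.tail_cons] at hz
        rw [List.mem_reverse] at hz
        obtain ⟨m, hmr, rfl⟩ := List.mem_map.mp hz
        rw [List.mem_range] at hmr
        refine ⟨j + (m : ZMod n), ?_, rfl⟩
        intro h0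
        have hm : (m : ZMod n) = -j := by linear_combination h0
        have hv := h.val_cast_lt (show m < n by omega)
        rw [hm, h.val_neg' hj] at hv
        omega
  obtain ⟨estar, hCE, ⟨t, ht0, htmem⟩, p2, hp2, hl2, hne, htail⟩ := harc
  refine ⟨estar, hCE, ⟨t, ht0, htmem⟩, ?_⟩
  intro x hx
  obtain ⟨T, hT, hTlen⟩ := h.hconn.exists_path_of_dist x (vs 0)
  have hav := h.path_avoids_cycle hT (Or.inl hx) (Or.inr rfl)
  refine ⟨T.append p2, ?_, ?_, ?_⟩
  · rw [Walk.isPath_def, Walk.support_append]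
    refine List.Nodup.append hT.support_nodup hp2.support_nodup.tail ?_
    intro z hz1 hz2
    obtain ⟨t', ht'0, rfl⟩ := htail z hz2
    rcases hav _ hz1 with h1 | h1
    · exact h1 ⟨t', rfl⟩
    · exact ht'0 (h.hinj h1)
  · rw [Walk.length_append, hTlen, hl2, h.dist_split hx j]
  · rw [Walk.edges_append]
    intro hmem
    rcases List.mem_append.mp hmem with h1 | h1
    · have hsupp : vs t ∈ T.support := mem_support_of_mem_edges' T h1 htmem
      rcases hav _ hsupp with h2 | h2
      · exact h2 ⟨t, rfl⟩
      · exact ht0 (h.hinj h2)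
    · exact hne h1


lemma lower (h : Setup G n vs) {S : Set V} (hS : IsMEGSet G S) :
    (leaves G).ncard + 2 ≤ S.ncard := by
  have hlv : leaves G ⊆ S := leaves_subset_of_MEG hS
  by_contra hcon
  push_neg at hcon
  have hcards : S.ncard = (leaves G).ncard + (S \ leaves G).ncard := by
    rw [← Set.ncard_union_eq Set.disjoint_sdiff_right (Set.toFinite _) (Set.toFinite _),
      Set.union_diff_cancel hlv]
  have h1 : (S \ leaves G).ncard ≤ 1 := by omega
  obtain ⟨z, hzsub⟩ : ∃ z, S ⊆ leaves G ∪ {z} := by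
    rcases (S \ leaves G).eq_empty_or_nonempty with h0 | ⟨z0, hz0⟩
    · refine ⟨vs 0, fun s hs => Or.inl ?_⟩
      by_contra hsl
      rw [Set.eq_empty_iff_forall_notMem] at h0
      exact h0 s ⟨hs, hsl⟩
    · refine ⟨z0, fun s hs => ?_⟩
      by_cases hsl : s ∈ leaves G
      · exact Or.inl hsl
      · exact Or.inr ((Set.ncard_le_one_iff (Set.toFinite _)).mp h1 ⟨hs, hsl⟩ hz0)
  have htree : ∀ w, w ∈ leaves G → w ∉ Set.range vs := fun w hw => h.leaves_off_cycle hw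
  by_cases hzC : z ∈ Set.range vs ∧ z ≠ vs 0
  · obtain ⟨⟨j, rfl⟩, hzb⟩ := hzC
    have hj : j ≠ 0 := fun h0 => hzb (by rw [h0])
    obtain ⟨estar, hCE, ⟨t, ht0, htmem⟩, hgood⟩ := h.avoid_edge hj
    have hesG : estar ∈ G.edgeSet := by
      obtain ⟨i, rfl⟩ := hCE
      exact h.hadj i
    obtain ⟨x, hxS, y, hyS, hmon⟩ := hS estar hesG
    have hclass : ∀ w, w ∈ S → w ∈ leaves G ∨ w = vs j := by
      intro w hw
      rcases hzsub hw with h2 | h2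
      · exact Or.inl h2
      · exact Or.inr h2
    by_cases hxy : x = y
    · subst hxy
      exact not_monitors_self G x estar hmon
    rcases hclass x hxS with hxl | rfl
    · rcases hclass y hyS with hyl | rfl
      · obtain ⟨⟨p, hp, hplen⟩, hall⟩ := hmon
        exact h.edges_not_CE
          (h.path_avoids_cycle hp (Or.inl (htree x hxl)) (Or.inl (htree y hyl)))
          _ (hall p hp hplen) hCE
      · obtain ⟨q, hq, hqlen, hqne⟩ := hgood x (htree x hxl)
        exact hqne (hmon.2 q hq hqlen)
    · rcases hclass y hyS with hyl | rfl
      · obtain ⟨q, hq, hqlen, hqne⟩ := hgood y (htree y hyl)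
        apply hqne
        have := hmon.2 q.reverse hq.reverse
          (by rw [Walk.length_reverse, hqlen, SimpleGraph.dist_comm])
        rwa [Walk.edges_reverse, List.mem_reverse] at this
      · exact hxy rfl
  · have hzt : z ∉ Set.range vs ∨ z = vs 0 := by
      by_cases hz : z ∈ Set.range vs
      · right
        by_contra hzb
        exact hzC ⟨hz, hzb⟩
      · exact Or.inl hz
    have hes : s(vs 0, vs (0 + 1)) ∈ G.edgeSet := h.hadj 0
    obtain ⟨x, hxS, y, hyS, hmon⟩ := hS _ hes
    by_cases hxy : x = y
    · subst hxy
      exact not_monitors_self G x _ hmon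
    have hx' : x ∉ Set.range vs ∨ x = vs 0 := by
      rcases hzsub hxS with h2 | h2
      · exact Or.inl (htree x h2)
      · rw [Set.mem_singleton_iff] at h2
        exact h2 ▸ hzt
    have hy' : y ∉ Set.range vs ∨ y = vs 0 := by
      rcases hzsub hyS with h2 | h2
      · exact Or.inl (htree y h2)
      · rw [Set.mem_singleton_iff] at h2
        exact h2 ▸ hzt
    obtain ⟨⟨p, hp, hplen⟩, hall⟩ := hmon
    exact h.edges_not_CE (h.path_avoids_cycle hp hx' hy') _ (hall p hp hplen) ⟨0, rfl⟩

/-- The main theorem, in the abstract setting. -/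
theorem meg (h : Setup G n vs) : megNum G = (leaves G).ncard + 2 := by
  have hn := h.hn
  set a : ℕ := (n - 1) / 2 with ha
  have ha2 : 2 ≤ a := by omega
  have han : 2 * a < n := by omega
  have hz1C : vs ((a : ZMod n)) ∈ Set.range vs := ⟨_, rfl⟩
  have hz2C : vs (-((a : ℕ) : ZMod n)) ∈ Set.range vs := ⟨_, rfl⟩
  have hz12 : vs ((a : ZMod n)) ≠ vs (-((a : ℕ) : ZMod n)) := by
    intro heq
    have h2 := h.hinj heq
    have h3 : ((2 * a : ℕ) : ZMod n) = 0 := by push_cast; linear_combination h2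
    have := h.natcast_eq_zero (by omega) h3
    omega
  have hdisj : Disjoint (leaves G) ({vs ((a : ZMod n)), vs (-((a : ℕ) : ZMod n))} : Set V) := by
    rw [Set.disjoint_left]
    intro w hw hw2
    rcases hw2 with rfl | rfl
    · exact h.leaves_off_cycle hw hz1C
    · exact h.leaves_off_cycle hw hz2C
  have hcard : (leaves G ∪ {vs ((a : ZMod n)), vs (-((a : ℕ) : ZMod n))}).ncard
      = (leaves G).ncard + 2 := by
    rw [Set.ncard_union_eq hdisj (Set.toFinite _) (Set.toFinite _), Set.ncard_pair hz12]
  apply le_antisymm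
  · exact Nat.sInf_le ⟨_, h.upper_isMEG, hcard⟩
  · have hne : {m | ∃ S : Set V, IsMEGSet G S ∧ S.ncard = m}.Nonempty :=
      ⟨_, _, h.upper_isMEG, rfl⟩
    obtain ⟨S, hS, hcardS⟩ := Nat.sInf_mem hne
    rw [megNum, ← hcardS]
    exact h.lower hS


end Setup

/-! ### Bridge from the concrete hypotheses -/

/-- Position lemma for walks. -/
lemma support_getElem? {G : SimpleGraph V} :
    ∀ {u w : V} (p : G.Walk u w) (i : ℕ), i ≤ p.length →
      p.support[i]? = some (p.getVert i) := by
  intro u w p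
  induction p with
  | nil =>
    intro i hi
    simp only [Walk.length_nil, Nat.le_zero] at hi
    subst hi
    simp
  | @cons a b c hadj q ih =>
    intro i hi
    cases i with
    | zero => simp
    | succ i' =>
      rw [Walk.support_cons, List.getElem?_cons_succ, Walk.getVert_cons_succ]
      exact ih i' (by simpa [Walk.length_cons] using hi)

lemma walk_edge_getVert {G : SimpleGraph V} :
    ∀ {u w : V} (p : G.Walk u w), ∀ e ∈ p.edges,
      ∃ i, i < p.length ∧ e = s(p.getVert i, p.getVert (i + 1)) := by
  intro u w p
  induction p with
  | nil => intro e he; simp at he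
  | @cons a b c hadj q ih =>
    intro e he
    rw [Walk.edges_cons] at he
    rcases List.mem_cons.mp he with rfl | he2
    · exact ⟨0, by simp [Walk.length_cons], by simp [Walk.getVert_cons_succ]⟩
    · obtain ⟨i, hi, hei⟩ := ih e he2
      refine ⟨i + 1, by simp [Walk.length_cons]; omega, ?_⟩
      rw [Walk.getVert_cons_succ, Walk.getVert_cons_succ]
      exact hei

/-- A closed walk of positive length contains its base point in the support tail. -/
lemma base_mem_tail {G : SimpleGraph V} {v : V} (c : G.Walk v v) (hpos : 0 < c.length) :
    v ∈ c.support.tail := by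
  have h1 := support_getElem? c c.length le_rfl
  rw [Walk.getVert_length] at h1
  have h2 : c.support.tail[c.length - 1]? = some v := by
    rw [c.support_eq_cons] at h1
    rwa [show c.length = (c.length - 1) + 1 by omega, List.getElem?_cons_succ] at h1
  exact List.mem_of_getElem? h2

lemma closed_mem_support_iff {G : SimpleGraph V} {v w : V} (c : G.Walk v v)
    (hpos : 0 < c.length) : w ∈ c.support ↔ w ∈ c.support.tail := by
  constructor
  · intro hw
    rw [c.support_eq_cons] at hw
    rcases List.mem_cons.mp hw with rfl | h2
    · exact base_mem_tail c hpos
    · exact h2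
  · intro hw
    rw [c.support_eq_cons]
    exact List.mem_cons_of_mem _ hw

end MEGProof

end MEGAux

open MEGProof in
theorem unicyclic_one_branch_MEG {V : Type*} [Fintype V] (G : SimpleGraph V)
    (hG : G.Connected) (x : V) (c : G.Walk x x) (hc : c.IsCycle) (hk : 5 ≤ c.length)
    (huniq : ∀ (y : V) (c' : G.Walk y y), c'.IsCycle → ∀ e, e ∈ c'.edges ↔ e ∈ c.edges)
    (hone : ∃! v, v ∈ c.support ∧ 3 ≤ (G.neighborSet v).ncard) :
    megNum G = (leaves G).ncard + 2 := by
  classical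
  obtain ⟨b, ⟨hbsupp, hb3⟩, hbu⟩ := hone
  set c' : G.Walk b b := c.rotate b hbsupp with hc'def
  have hc' : c'.IsCycle := hc.rotate hbsupp
  have hedges : ∀ e, e ∈ c'.edges ↔ e ∈ c.edges :=
    fun e => (Walk.rotate_edges c b hbsupp).perm.mem_iff
  have hlen : c'.length = c.length := by
    have h1 := (Walk.rotate_edges c b hbsupp).perm.length_eq
    rwa [Walk.length_edges, Walk.length_edges] at h1
  set n := c.length with hndef
  have hn : 5 ≤ n := hk
  haveI : NeZero n := ⟨by omega⟩
  set vs : ZMod n → V := fun i => c'.getVert i.val with hvs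
  have hval_lt : ∀ i : ZMod n, i.val < n := fun i => ZMod.val_lt i
  have hvs0 : vs 0 = b := by
    simp [hvs, Walk.getVert_zero]
  have hgetn : c'.getVert n = b := by
    rw [← hlen, Walk.getVert_length]
  -- injectivity of getVert on [0, n)
  have hgetinj : ∀ i j : ℕ, i < n → j < n → c'.getVert i = c'.getVert j → i = j := by
    have hnodup := hc'.support_nodup
    have htail : ∀ i : ℕ, 1 ≤ i → i ≤ n → c'.support.tail[i - 1]? = some (c'.getVert i) := by
      intro i h1 h2
      have h5 := support_getElem? c' ((i - 1) + 1) (by omega)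
      rw [c'.support_eq_cons, List.getElem?_cons_succ, show (i - 1) + 1 = i by omega] at h5
      exact h5
    have htlen : c'.support.tail.length = n := by
      have := c'.length_support
      rw [hlen] at this
      rw [c'.support_eq_cons] at this
      simpa using this
    intro i j hi hj hij
    rcases Nat.eq_zero_or_pos i with rfl | hi1
    · rcases Nat.eq_zero_or_pos j with rfl | hj1
      · rfl
      · exfalso
        have e1 := htail j hj1 (by omega)
        have e2 := htail n (by omega) le_rfl
        rw [hgetn] at e2
        rw [← hij, Walk.getVert_zero] at e1
        have := (List.getElem?_inj (by omega) hnodup).mp (e1.trans e2.symm)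
        omega
    · rcases Nat.eq_zero_or_pos j with rfl | hj1
      · exfalso
        have e1 := htail i hi1 (by omega)
        have e2 := htail n (by omega) le_rfl
        rw [hgetn] at e2
        rw [hij, Walk.getVert_zero] at e1
        have := (List.getElem?_inj (by omega) hnodup).mp (e1.trans e2.symm)
        omega
      · have e1 := htail i hi1 (by omega)
        have e2 := htail j hj1 (by omega)
        rw [hij] at e1
        have := (List.getElem?_inj (by omega) hnodup).mp (e1.trans e2.symm)
        omega
  have hinj : Function.Injective vs := by
    intro i j hij
    have := hgetinj i.val j.val (hval_lt i) (hval_lt j) hij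
    have hi := ZMod.natCast_rightInverse i
    have hj := ZMod.natCast_rightInverse j
    rw [← hi, ← hj, this]
  -- adjacency around the cycle
  have hadj : ∀ i : ZMod n, G.Adj (vs i) (vs (i + 1)) := by
    intro i
    by_cases h1 : i.val + 1 = n
    · have h2 : (i + 1).val = 0 := by
        have : (i + 1) = ((i.val + 1 : ℕ) : ZMod n) := by
          rw [Nat.cast_add, ZMod.natCast_rightInverse i]
          norm_num
        rw [this, h1, ZMod.natCast_self]
        exact ZMod.val_zero
      have h3 := c'.adj_getVert_succ (i := i.val) (by rw [hlen]; omega)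
      rw [show i.val + 1 = n from h1, hgetn] at h3
      simpa [hvs, h2, hvs0] using h3
    · have h2 : (i + 1).val = i.val + 1 := by
        have : (i + 1) = ((i.val + 1 : ℕ) : ZMod n) := by
          rw [Nat.cast_add, ZMod.natCast_rightInverse i]
          norm_num
        rw [this, ZMod.val_cast_of_lt (by have := hval_lt i; omega)]
      have h3 := c'.adj_getVert_succ (i := i.val) (by rw [hlen]; have := hval_lt i; omega)
      simpa [hvs, h2] using h3
  -- membership in the cycle support
  have hmemC : ∀ w, w ∈ c.support ↔ w ∈ Set.range vs := by
    intro w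
    have hcc' : w ∈ c.support ↔ w ∈ c'.support := by
      rw [closed_mem_support_iff c (by omega), closed_mem_support_iff c' (by omega)]
      exact ((Walk.support_rotate c b hbsupp).perm.mem_iff).symm
    rw [hcc', Walk.mem_support_iff_exists_getVert]
    constructor
    · rintro ⟨k, hk1, hk2⟩
      rw [hlen] at hk2
      by_cases hkn : k = n
      · subst hkn
        refine ⟨0, ?_⟩
        show c'.getVert (0 : ZMod n).val = w
        rw [ZMod.val_zero, Walk.getVert_zero, ← hvs0]
        show vs 0 = w
        rw [hvs0, ← hgetn]
        exact hk1
      · refine ⟨(k : ZMod n), ?_⟩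
        show c'.getVert ((k : ZMod n)).val = w
        rw [ZMod.val_cast_of_lt (by omega)]
        exact hk1
    · rintro ⟨i, rfl⟩
      exact ⟨i.val, rfl, by rw [hlen]; exact le_of_lt (hval_lt i)⟩
  -- the cycle-edge set
  have hCEform : ∀ i : ℕ, i < n →
      s(c'.getVert i, c'.getVert (i + 1)) = s(vs ((i : ZMod n)), vs ((i : ZMod n) + 1)) := by
    intro i hi
    have h1 : vs ((i : ZMod n)) = c'.getVert i := by
      show c'.getVert ((i : ZMod n)).val = c'.getVert i
      rw [ZMod.val_cast_of_lt hi]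
    by_cases h2 : i + 1 = n
    · have h3 : ((i : ZMod n) + 1) = 0 := by
        rw [show (1 : ZMod n) = ((1 : ℕ) : ZMod n) by norm_num, ← Nat.cast_add, h2,
          ZMod.natCast_self]
      rw [h1, h3, hvs0, show i + 1 = n from h2, hgetn]
    · have h3 : vs ((i : ZMod n) + 1) = c'.getVert (i + 1) := by
        rw [hvs]; simp only
        rw [show ((i : ZMod n) + 1) = ((i + 1 : ℕ) : ZMod n) by push_cast; ring,
          ZMod.val_cast_of_lt (by omega)]
      rw [h1, h3]
  have hCEc : ∀ e ∈ c.edges, e ∈ CE vs := by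
    intro e he
    rw [← hedges] at he
    obtain ⟨i, hi, rfl⟩ := walk_edge_getVert c' e he
    rw [hlen] at hi
    exact ⟨(i : ZMod n), hCEform i hi⟩
  -- degree conditions
  have hdeg : ∀ i : ZMod n, i ≠ 0 → G.neighborSet (vs i) = {vs (i - 1), vs (i + 1)} := by
    intro i hi
    have hmem : vs i ∈ c.support := (hmemC _).mpr ⟨i, rfl⟩
    have hne : vs i ≠ b := by
      rw [← hvs0]
      intro hcon
      exact hi (hinj hcon)
    have hdeg2 : (G.neighborSet (vs i)).ncard ≤ 2 := by
      by_contra hcon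
      exact hne (hbu (vs i) ⟨hmem, by omega⟩)
    have hsub : ({vs (i - 1), vs (i + 1)} : Set V) ⊆ G.neighborSet (vs i) := by
      rintro w (rfl | rfl)
      · have := hadj (i - 1)
        rw [sub_add_cancel] at this
        exact this.symm
      · exact hadj i
    have hpair : vs (i - 1) ≠ vs (i + 1) := by
      intro hcon
      have h2 := hinj hcon
      have h3 : ((2 : ℕ) : ZMod n) = 0 := by push_cast; linear_combination -h2
      rw [ZMod.natCast_eq_zero_iff] at h3
      have := Nat.le_of_dvd (by norm_num) h3
      omega
    exact (Set.eq_of_subset_of_ncard_le hsub (by rw [Set.ncard_pair hpair]; exact hdeg2)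
      (Set.toFinite _)).symm
  -- acyclicity of the graph without cycle edges
  have hacyc : (G.deleteEdges (CE vs)).IsAcyclic := by
    intro y c₂ hc₂
    have hsub : ∀ e ∈ c₂.edges, e ∈ G.edgeSet := by
      intro e he
      have := c₂.edges_subset_edgeSet he
      rw [edgeSet_deleteEdges] at this
      exact this.1
    have hc₃ := hc₂.transfer hsub
    have he₁ : c.edges ≠ [] := by
      intro h0
      have h1 := congrArg List.length h0
      rw [Walk.length_edges] at h1
      rw [← hndef] at h1
      simp at h1
      omega
    have he₁mem : c.edges.head he₁ ∈ c.edges := List.head_mem he₁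
    have he₁CE : c.edges.head he₁ ∈ CE vs := hCEc _ he₁mem
    have h2 := (huniq y (c₂.transfer G hsub) hc₃ (c.edges.head he₁)).mpr he₁mem
    rw [Walk.edges_transfer] at h2
    have h3 := c₂.edges_subset_edgeSet h2
    rw [edgeSet_deleteEdges] at h3
    exact h3.2 he₁CE
  have hsetup : Setup G n vs :=
    { hconn := hG, hn := hn, hinj := hinj, hadj := hadj, hdeg := hdeg,
      hb3 := by rw [hvs0]; exact hb3, hacyc := hacyc }
  exact hsetup.meg
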